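/- Let R be a ring with a central element c, an element s, and elements x : ℤ → R satisfying x m * s = x (m+1) + x (m-1) * c for all m ≥ 2 and x 1 * s = x 2 + r for a given element r with suitable commutation with s and c (namely s * r = r' where r' satisfies the analogous recursion). Define S 0 = 1, S 1 = s, S (n+1) = S n * s - c * S (n-1). Then for all n ≥ 1 and m ≥ 2: x m * S n = x (n+m) + x (m-1) * c * S (n-1). -/

import Mathlib

/-- Theorem 3.6(4): x m S n = x (n+m) + x (m-1) c S (n-1) for n ≥ 1 and m ≥ 2. -/
theorem positive_cluster_variable_times_Sn
    (R : Type*) [Ring R] (c s r : R)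
    (hc : ∀ t : R, c * t = t * c)
    (x : ℤ → R)
    (hxm : ∀ m : ℤ, 2 ≤ m → x m * s = x (m + 1) + x (m - 1) * c)
    (hx1 : x 1 * s = x 2 + r)
    (S : ℕ → R) (hS0 : S 0 = 1) (hS1 : S 1 = s)
    (hrec : ∀ n : ℕ, 1 ≤ n → S (n + 1) = S n * s - c * S (n - 1)) :
    ∀ (n : ℕ) (m : ℤ), 1 ≤ n → 2 ≤ m →
      x m * S n = x ((n : ℤ) + m) + x (m - 1) * c * S (n - 1) := by
  intro n
  induction n using Nat.strong_induction_on with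
  | _ n IH =>
    intro m hn hm
    match n, hn with
    | 1, _ =>
        rw [hS1, show (1:ℕ) - 1 = 0 from rfl, hS0, mul_one,
          show ((1:ℕ):ℤ) + m = m + 1 by push_cast; ring]
        exact hxm m hm
    | 2, _ =>
        have hS2a : S 2 = s * s - c := by
          have := hrec 1 le_rfl
          simpa [hS0, hS1] using this
        have h1 : x m * s = x (m+1) + x (m-1) * c := hxm m hm
        have h2 : x (m+1) * s = x (m+2) + x m * c := by
          have := hxm (m+1) (by omega)
          rw [show m+1+1 = m+2 by ring, show m+1-1 = m by ring] at this
          exact this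
        rw [show (2:ℕ) - 1 = 1 from rfl, hS1,
          show ((2:ℕ):ℤ) + m = m + 2 by push_cast; ring]
        linear_combination (norm := noncomm_ring) x m * hS2a + h1 * s + h2
    | (k+3), _ =>
        have hS3 : S (k+3) = S (k+2) * s - c * S (k+1) := by
          have := hrec (k+2) (by omega)
          simpa using this
        have hS2' : S (k+1) * s = S (k+2) + c * S k := by
          have := hrec (k+1) (by omega)
          simp only [Nat.add_sub_cancel] at this
          linear_combination (norm := noncomm_ring) -this
        have IH2 : x m * S (k+2) = x ((k:ℤ)+2+m) + x (m-1) * c * S (k+1) := by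
          have := IH (k+2) (by omega) m (by omega) hm
          simp only [show k+2-1 = k+1 from rfl] at this
          rw [this]
          push_cast
          ring_nf
        have IH1 : x m * S (k+1) = x ((k:ℤ)+1+m) + x (m-1) * c * S k := by
          have := IH (k+1) (by omega) m (by omega) hm
          simp only [Nat.add_sub_cancel] at this
          rw [this]
          push_cast
          ring_nf
        have hx2' : x ((k:ℤ)+2+m) * s = x ((k:ℤ)+3+m) + x ((k:ℤ)+1+m) * c := by
          have := hxm ((k:ℤ)+2+m) (by omega)
          rw [show (k:ℤ)+2+m+1 = (k:ℤ)+3+m by ring,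
            show (k:ℤ)+2+m-1 = (k:ℤ)+1+m by ring] at this
          exact this
        rw [show k+3-1 = k+2 from rfl, show ((k+3:ℕ):ℤ) + m = (k:ℤ)+3+m by push_cast; ring]
        linear_combination (norm := noncomm_ring)
          x m * hS3 + IH2 * s + hc (x m) * S (k+1) - c * IH1 + hx2'
            + (x (m-1) * c) * hS2' - hc (x ((k:ℤ)+1+m)) - hc (x (m-1)) * (c * S k)
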